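/- Assume the discrete continuity constraint holds at node i, and that dadd i j ≥ 0 and dp i j ≥ 0 for all j ≠ i. Then the nodal energy production satisfies the local energy inequality ⟪u i, RHS i⟫ ≤ Σ_{j ≠ i} F i j. (Since m i · d/dt(‖u i‖²/2) = ⟪u i, m i • u i'⟫ = ⟪u i, RHS i⟫ along solutions of the semi-discrete scheme, this is the semi-discrete local energy inequality of Theorem 1.) -/

import Mathlib

open scoped RealInnerProductSpace BigOperators

/-- Local semi-discrete energy inequality (Theorem 1): assuming the discrete
continuity constraint at node `i` and nonnegativity of `dadd i j` and `dp i j`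
for `j ≠ i`, the nodal energy production satisfies
`⟪u i, RHS i⟫ ≤ Σ_{j ≠ i} F i j`. -/
theorem local_energy_inequality
    (d N : ℕ) (hd : 1 ≤ d) (hN : 1 ≤ N)
    (u : Fin N → EuclideanSpace ℝ (Fin d)) (p : Fin N → ℝ)
    (c : Fin N → Fin N → EuclideanSpace ℝ (Fin d))
    (hc : ∀ i j, c j i = -c i j)
    (atil dadd dp F : Fin N → Fin N → ℝ)
    (hatil : ∀ i j, atil i j = ⟪((1 : ℝ) / 2) • (u j + u i), c i j⟫)
    (hdadd_symm : ∀ i j, dadd i j = dadd j i)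
    (hdp_symm : ∀ i j, dp i j = dp j i)
    (hF : ∀ i j, i ≠ j → F i j =
      (atil i j / 2) * ‖u j - u i‖ ^ 2
      + (1 / 2) * ⟪c i j, u j - u i⟫ * (p j - p i)
      - ⟪((1 : ℝ) / 2) • (u j + u i), c i j⟫
          * (‖u j‖ ^ 2 / 2 + p j + ‖u i‖ ^ 2 / 2 + p i)
      + dadd i j * (‖u j‖ ^ 2 / 2 - ‖u i‖ ^ 2 / 2)
      + dp i j * (p j ^ 2 / 2 - p i ^ 2 / 2))
    (RHS : Fin N → EuclideanSpace ℝ (Fin d))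
    (hRHS : ∀ i, RHS i =
      (∑ j ∈ Finset.univ.erase i,
        ((dadd i j - atil i j) • (u j - u i) - (p j - p i) • c i j))
      - (∑ j ∈ Finset.univ.erase i, atil i j) • u i)
    (i : Fin N)
    (hcont : ∑ j ∈ Finset.univ.erase i,
      (dp i j * (p j - p i) - ⟪u j + u i, c i j⟫) = 0)
    (hdadd_nn : ∀ j, j ≠ i → 0 ≤ dadd i j)
    (hdp_nn : ∀ j, j ≠ i → 0 ≤ dp i j) :
    ⟪u i, RHS i⟫ ≤ ∑ j ∈ Finset.univ.erase i, F i j := by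

  have hinner : ⟪u i, RHS i⟫ =
      ∑ j ∈ Finset.univ.erase i,
        (⟪u i, (dadd i j - atil i j) • (u j - u i) - (p j - p i) • c i j⟫
          - atil i j * ⟪u i, u i⟫) := by
    rw [hRHS, inner_sub_right, inner_sum, real_inner_smul_right, Finset.sum_mul,
      Finset.sum_sub_distrib]
  rw [hinner]
  have key : ∀ j ∈ Finset.univ.erase i,
      ⟪u i, (dadd i j - atil i j) • (u j - u i) - (p j - p i) • c i j⟫
        - atil i j * ⟪u i, u i⟫
      = F i j - ((dadd i j / 2) * ‖u j - u i‖ ^ 2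
          + (dp i j / 2) * (p j - p i) ^ 2
          + p i * (dp i j * (p j - p i) - ⟪u j + u i, c i j⟫)) := by
    intro j hj
    have hij : i ≠ j := (Finset.ne_of_mem_erase hj).symm
    have c1 : ⟪u j, u i⟫ = ⟪u i, u j⟫ := real_inner_comm _ _
    have c2 : ⟪c i j, u j⟫ = ⟪u j, c i j⟫ := real_inner_comm _ _
    have c3 : ⟪c i j, u i⟫ = ⟪u i, c i j⟫ := real_inner_comm _ _
    have n1 : ‖u j - u i‖ ^ 2 = ⟪u j, u j⟫ - 2 * ⟪u i, u j⟫ + ⟪u i, u i⟫ := by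
      rw [← real_inner_self_eq_norm_sq]
      simp only [inner_sub_left, inner_sub_right, c1]; ring
    have n2 : ‖u j‖ ^ 2 = ⟪u j, u j⟫ := (real_inner_self_eq_norm_sq _).symm
    have n3 : ‖u i‖ ^ 2 = ⟪u i, u i⟫ := (real_inner_self_eq_norm_sq _).symm
    rw [hF i j hij, hatil i j]
    simp only [inner_sub_right, inner_sub_left, inner_add_right, inner_add_left,
      real_inner_smul_left, real_inner_smul_right, c1, c2, c3, n1, n2, n3]
    ring
  rw [Finset.sum_congr rfl key, Finset.sum_sub_distrib]
  have h0 : ∑ j ∈ Finset.univ.erase i,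
      ((dadd i j / 2) * ‖u j - u i‖ ^ 2 + (dp i j / 2) * (p j - p i) ^ 2
        + p i * (dp i j * (p j - p i) - ⟪u j + u i, c i j⟫)) ≥ 0 := by
    rw [Finset.sum_add_distrib, ← Finset.mul_sum, hcont, mul_zero, add_zero,
      Finset.sum_add_distrib]
    apply add_nonneg <;> apply Finset.sum_nonneg <;> intro j hj
    · exact mul_nonneg (by linarith [hdadd_nn j (Finset.ne_of_mem_erase hj)])
        (sq_nonneg _)
    · exact mul_nonneg (by linarith [hdp_nn j (Finset.ne_of_mem_erase hj)])
        (sq_nonneg _)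
  linarith
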